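/- arXiv:1407.3004 — 2 statements merged into one kernel-verified Lean document; each statement's English description precedes it below -/
import Mathlib

section
/- Let (x*, y*) be a Nash equilibrium of bimatrix game (R, C) with payoffs in [0,1], let v* = (x*)ᵀ R y*, let δ > 0, let k ≥ 2 ln(1/δ)/δ², and let J_1, …, J_k be i.i.d. with distribution y*, defining Y_j = (1/k)Σ_t 1[J_t = j]. Then for any set I ⊆ supp(x*) with |I| ≤ k, the probability that R_{i•} Y < v* − δ for some i ∈ I is at most k · e^{−2δ²k} < 1/2. -/
open MeasureTheory ProbabilityTheory

lemma hoeffding_pointwise {m : ℝ} (hm0 : 0 ≤ m) (hm1 : m ≤ 1) (s : ℝ) :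
    1 - m + m * Real.exp s ≤ Real.exp (s * m + s ^ 2 / 8) := by
  set D : ℝ → ℝ := fun x => 1 - m + m * Real.exp x with hDdef
  have hD : ∀ x, 0 < D x := by
    intro x
    have h1 := Real.exp_pos x
    simp only [hDdef]
    rcases hm0.eq_or_lt with h | h
    · rw [← h]; norm_num
    · nlinarith [mul_pos h h1]
  set u : ℝ → ℝ := fun x => m * Real.exp x / D x with hudef
  set g : ℝ → ℝ := fun x => x * m + x ^ 2 / 8 - Real.log (D x) with hgdef
  set g' : ℝ → ℝ := fun x => m + x / 4 - u x with hg'def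
  have hDd : ∀ x, HasDerivAt D (m * Real.exp x) x := by
    intro x
    exact ((Real.hasDerivAt_exp x).const_mul m).const_add (1 - m)
  have hgd : ∀ x, HasDerivAt g (g' x) x := by
    intro x
    have h1 : HasDerivAt (fun y : ℝ => y * m + y ^ 2 / 8) (m + x / 4) x := by
      have := ((hasDerivAt_id x).mul_const m).add ((hasDerivAt_pow 2 x).div_const 8)
      refine HasDerivAt.congr_deriv this ?_
      ring
    have h2 : HasDerivAt (fun y => Real.log (D y)) (m * Real.exp x / D x) x :=
      (hDd x).log (hD x).ne'
    exact h1.sub h2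
  have hg'd : ∀ x, HasDerivAt g' (1 / 4 - u x * (1 - u x)) x := by
    intro x
    have hu : HasDerivAt u (u x * (1 - u x)) x := by
      have h1 : HasDerivAt (fun y => m * Real.exp y) (m * Real.exp x) x :=
        (Real.hasDerivAt_exp x).const_mul m
      have := h1.div (hDd x) (hD x).ne'
      refine HasDerivAt.congr_deriv this ?_
      have hDx : 1 - m + m * Real.exp x ≠ 0 := (hD x).ne'
      simp only [hudef, hDdef]
      field_simp
    have h1 : HasDerivAt (fun y : ℝ => m + y / 4) (1 / 4) x := by
      simpa using ((hasDerivAt_id x).div_const 4).const_add m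
    exact h1.sub hu
  have hg'mono : Monotone g' := by
    apply monotone_of_deriv_nonneg
    · exact fun x => (hg'd x).differentiableAt
    · intro x
      rw [(hg'd x).deriv]
      nlinarith [sq_nonneg (u x - 1 / 2)]
  have hg'0 : g' 0 = 0 := by
    simp only [hg'def, hudef, hDdef]
    norm_num
  have hg0 : g 0 = 0 := by
    simp only [hgdef, hDdef]
    norm_num
  have hgnonneg : ∀ x, 0 ≤ g x := by
    intro x
    rcases le_or_gt 0 x with hx | hx
    · have hmono : MonotoneOn g (Set.Ici 0) := by
        apply monotoneOn_of_deriv_nonneg (convex_Ici 0)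
        · exact (fun y _ => ((hgd y).differentiableAt.continuousAt.continuousWithinAt))
        · exact fun y hy => ((hgd y).differentiableAt.differentiableWithinAt)
        · intro y hy
          rw [(hgd y).deriv]
          rw [interior_Ici] at hy
          have : g' 0 ≤ g' y := hg'mono (le_of_lt hy)
          rw [hg'0] at this
          exact this
      have := hmono (Set.self_mem_Ici) (Set.mem_Ici.2 hx) hx
      rwa [hg0] at this
    · have hmono : AntitoneOn g (Set.Iic 0) := by
        apply antitoneOn_of_deriv_nonpos (convex_Iic 0)
        · exact (fun y _ => ((hgd y).differentiableAt.continuousAt.continuousWithinAt))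
        · exact fun y hy => ((hgd y).differentiableAt.differentiableWithinAt)
        · intro y hy
          rw [(hgd y).deriv]
          rw [interior_Iic] at hy
          have : g' y ≤ g' 0 := hg'mono (le_of_lt hy)
          rw [hg'0] at this
          exact this
      have := hmono (Set.mem_Iic.2 hx.le) (Set.self_mem_Iic) hx.le
      rwa [hg0] at this
  have hlog : Real.log (D s) ≤ s * m + s ^ 2 / 8 := by
    have := hgnonneg s
    simp only [hgdef] at this
    linarith
  calc 1 - m + m * Real.exp s = D s := rfl
    _ = Real.exp (Real.log (D s)) := (Real.exp_log (hD s)).symm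
    _ ≤ Real.exp (s * m + s ^ 2 / 8) := Real.exp_le_exp.2 hlog

lemma decay_mono_aux {c t s : ℝ} (ht : 0 < t) (hts : t ≤ s) (hct : 1 ≤ c * t) :
    s * Real.exp (-(c * s)) ≤ t * Real.exp (-(c * t)) := by
  have h1 : s ≤ t * Real.exp (c * (s - t)) := by
    nlinarith [Real.add_one_le_exp (c * (s - t)), Real.exp_pos (c * (s - t))]
  calc s * Real.exp (-(c * s)) ≤ (t * Real.exp (c * (s - t))) * Real.exp (-(c * s)) :=
        mul_le_mul_of_nonneg_right h1 (Real.exp_pos _).le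
    _ = t * Real.exp (-(c * t)) := by
        rw [mul_assoc, ← Real.exp_add]
        ring_nf

lemma analytic_half_bound {k : ℕ} (hk : 0 < k) {δ : ℝ} (hδ : 0 < δ)
    (hkδ : 2 * Real.log (1 / δ) / δ ^ 2 ≤ (k : ℝ)) :
    (k : ℝ) * Real.exp (-2 * δ ^ 2 * k) < 1 / 2 := by
  have hK1 : (1 : ℝ) ≤ (k : ℝ) := by exact_mod_cast hk
  have he : (2 : ℝ) < Real.exp 1 := by
    have := Real.exp_one_gt_d9; linarith
  have hrw : -2 * δ ^ 2 * (k : ℝ) = -(2 * δ ^ 2 * k) := by ring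
  rw [hrw]
  rcases le_or_gt 1 (2 * δ ^ 2) with h | h
  · have h2 := decay_mono_aux (c := 2 * δ ^ 2) one_pos hK1 (by linarith)
    have h3 : Real.exp (-(2 * δ ^ 2 * 1)) ≤ Real.exp (-1) := by
      apply Real.exp_le_exp.2; linarith
    have h4 : Real.exp (-1) < 1 / 2 := by
      rw [Real.exp_neg]
      rw [inv_lt_comm₀ (Real.exp_pos 1) (by norm_num)]
      · linarith
    calc (k : ℝ) * Real.exp (-(2 * δ ^ 2 * k)) ≤ 1 * Real.exp (-(2 * δ ^ 2 * 1)) := h2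
      _ ≤ Real.exp (-1) := by rw [one_mul]; exact h3
      _ < 1 / 2 := h4
  · have hδ1 : δ < 1 := by nlinarith
    set L := Real.log (1 / δ) with hL
    have hLpos : 0 < L := Real.log_pos (by rw [lt_div_iff₀ hδ]; linarith)
    have hL4 : 1 / 4 ≤ L := by
      rw [hL, Real.le_log_iff_exp_le (by positivity)]
      by_contra hcon
      push_neg at hcon
      have h1 : (1 / δ) ^ 4 < Real.exp (1 / 4) ^ 4 := by
        exact pow_lt_pow_left₀ hcon (by positivity) (by norm_num)
      have h2 : Real.exp (1 / 4) ^ 4 = Real.exp 1 := by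
        rw [← Real.exp_nat_mul]; norm_num
      have h3 : (4 : ℝ) < (1 / δ) ^ 4 := by
        have : δ ^ 4 < 1 / 4 := by nlinarith
        rw [div_pow, one_pow, lt_div_iff₀ (by positivity)]
        nlinarith
      have := Real.exp_one_lt_d9
      linarith [h1, h2.symm ▸ h1]
    set t0 := 2 * L / δ ^ 2 with ht0
    have ht0pos : 0 < t0 := by positivity
    have hδ2 : (δ:ℝ) ^ 2 ≠ 0 := by positivity
    have hct0eq : 2 * δ ^ 2 * t0 = 4 * L := by
      rw [ht0]; field_simp; ring
    have hct0 : 1 ≤ 2 * δ ^ 2 * t0 := by rw [hct0eq]; linarith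
    have hdec := decay_mono_aux (c := 2 * δ ^ 2) ht0pos hkδ hct0
    have hexpL : Real.exp L = 1 / δ := Real.exp_log (by positivity)
    have hval : t0 * Real.exp (-(2 * δ ^ 2 * t0)) = 2 * L * δ ^ 2 := by
      rw [hct0eq, Real.exp_neg]
      have h4L : Real.exp (4 * L) = (1 / δ) ^ 4 := by
        rw [show (4:ℝ) * L = ((4:ℕ):ℝ) * L by norm_num, Real.exp_nat_mul, hexpL]
      rw [h4L, ht0]
      field_simp
    have hlogz : ∀ z : ℝ, 0 < z → Real.log z ≤ z / Real.exp 1 := by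
      intro z hz
      have h1 := Real.log_le_sub_one_of_pos (show 0 < z / Real.exp 1 by positivity)
      rw [Real.log_div hz.ne' (Real.exp_ne_zero 1), Real.log_exp] at h1
      linarith
    have h2L : 2 * L = Real.log ((1 / δ) ^ 2) := by
      rw [Real.log_pow]; push_cast; ring
    have hbound : 2 * L * δ ^ 2 ≤ 1 / Real.exp 1 := by
      have h1 : Real.log ((1 / δ) ^ 2) ≤ (1 / δ) ^ 2 / Real.exp 1 :=
        hlogz _ (by positivity)
      rw [h2L]
      have h2 : (1 / δ) ^ 2 * δ ^ 2 = 1 := by field_simp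
      calc Real.log ((1 / δ) ^ 2) * δ ^ 2 ≤ ((1 / δ) ^ 2 / Real.exp 1) * δ ^ 2 :=
            mul_le_mul_of_nonneg_right h1 (by positivity)
        _ = 1 / Real.exp 1 := by
            rw [div_mul_eq_mul_div, h2]
    have hfin : 1 / Real.exp 1 < 1 / 2 := by
      apply div_lt_div_of_pos_left one_pos (by norm_num) he
    calc (k : ℝ) * Real.exp (-(2 * δ ^ 2 * k)) ≤ t0 * Real.exp (-(2 * δ ^ 2 * t0)) := hdec
      _ = 2 * L * δ ^ 2 := hval
      _ ≤ 1 / Real.exp 1 := hbound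
      _ < 1 / 2 := hfin

lemma chernoff_one_row {n k : ℕ} {Ω : Type*} [MeasurableSpace Ω]
    (μ : Measure Ω) [IsProbabilityMeasure μ]
    (R : Matrix (Fin n) (Fin n) ℝ)
    (hR : ∀ i j, R i j ∈ Set.Icc (0:ℝ) 1)
    (ys : Fin n → ℝ) (hys0 : ∀ j, 0 ≤ ys j) (hys1 : ∑ j, ys j = 1)
    (vstar : ℝ) (δ : ℝ) (hδ : 0 < δ)
    (J : Fin k → Ω → Fin n) (hJmeas : ∀ t, Measurable (J t))
    (hindep : iIndepFun J μ)
    (hlaw : ∀ t j, μ {ω | J t ω = j} = ENNReal.ofReal (ys j))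
    (i : Fin n) (hm : ∑ j, R i j * ys j = vstar) :
    μ {ω | ∑ t, R i (J t ω) ≤ (k : ℝ) * (vstar - δ)} ≤
      ENNReal.ofReal (Real.exp (-(2 * δ ^ 2 * k))) := by
  classical
  set X : Fin k → Ω → ℝ := fun t ω => R i (J t ω) with hX
  have h_meas : ∀ t, Measurable (X t) := fun t =>
    (measurable_of_countable (R i)).comp (hJmeas t)
  have h_indepX : iIndepFun X μ :=
    hindep.comp (fun _ => R i) (fun _ => measurable_of_countable (R i))
  set s : ℝ := -(4 * δ) with hs
  have h_int : ∀ (c : ℝ) (t : Fin k), Integrable (fun ω => Real.exp (c * X t ω)) μ := by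
    intro c t
    have hmeas2 : Measurable fun ω => Real.exp (c * X t ω) :=
      ((h_meas t).const_mul c).exp
    refine (integrable_const (Real.exp |c|)).mono' hmeas2.aestronglyMeasurable
      (ae_of_all _ fun ω => ?_)
    rw [Real.norm_eq_abs, Real.abs_exp]
    apply Real.exp_le_exp.2
    have h0 := (hR i (J t ω)).1
    have h1 := (hR i (J t ω)).2
    nlinarith [le_abs_self c, abs_nonneg c]
  have h_int_sum : Integrable (fun ω => Real.exp (s * (∑ t, X t) ω)) μ :=
    h_indepX.integrable_exp_mul_sum h_meas (fun t _ => h_int s t)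
  have hmgf : ∀ t : Fin k, mgf (X t) μ s = ∑ j, ys j * Real.exp (s * R i j) := by
    intro t
    have hmap : IsProbabilityMeasure (μ.map (J t)) :=
      Measure.isProbabilityMeasure_map (hJmeas t).aemeasurable
    have h1 : mgf (X t) μ s = ∫ a, Real.exp (s * R i a) ∂(μ.map (J t)) := by
      rw [mgf]
      rw [integral_map (hJmeas t).aemeasurable]
      · exact (measurable_of_countable (fun a => Real.exp (s * R i a))).aestronglyMeasurable
    rw [h1, integral_fintype .of_finite]
    refine Finset.sum_congr rfl fun j _ => ?_
    rw [measureReal_def, Measure.map_apply (hJmeas t) (measurableSet_singleton j)]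
    have hpre : J t ⁻¹' {j} = {ω | J t ω = j} := by ext ω; simp
    rw [hpre, hlaw t j, ENNReal.toReal_ofReal (hys0 j), smul_eq_mul]
  have hmgf_le : ∀ t : Fin k, mgf (X t) μ s ≤ Real.exp (s * vstar + s ^ 2 / 8) := by
    intro t
    rw [hmgf t]
    have hconv : ∀ j, Real.exp (s * R i j) ≤ 1 - R i j + R i j * Real.exp s := by
      intro j
      have h0 := (hR i j).1
      have h1 := (hR i j).2
      have := convexOn_exp.2 (Set.mem_univ (0:ℝ)) (Set.mem_univ s)
        (by linarith : (0:ℝ) ≤ 1 - R i j) h0 (by ring)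
      simp only [smul_eq_mul, mul_zero, zero_add, Real.exp_zero, mul_one] at this
      rw [mul_comm]
      linarith [this]
    have hm01 : 0 ≤ ∑ j, R i j * ys j ∧ ∑ j, R i j * ys j ≤ 1 := by
      constructor
      · exact Finset.sum_nonneg fun j _ => mul_nonneg (hR i j).1 (hys0 j)
      · calc ∑ j, R i j * ys j ≤ ∑ j, ys j :=
              Finset.sum_le_sum fun j _ => by
                nlinarith [(hR i j).1, (hR i j).2, hys0 j]
          _ = 1 := hys1
    calc ∑ j, ys j * Real.exp (s * R i j)
        ≤ ∑ j, ys j * (1 - R i j + R i j * Real.exp s) :=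
          Finset.sum_le_sum fun j _ => mul_le_mul_of_nonneg_left (hconv j) (hys0 j)
      _ = 1 - (∑ j, R i j * ys j) + (∑ j, R i j * ys j) * Real.exp s := by
          have h1 : ∀ j, ys j * (1 - R i j + R i j * Real.exp s) =
              ys j - R i j * ys j + R i j * ys j * Real.exp s := fun j => by ring
          simp only [h1, Finset.sum_add_distrib, Finset.sum_sub_distrib, ← Finset.sum_mul, hys1]
      _ ≤ Real.exp (s * (∑ j, R i j * ys j) + s ^ 2 / 8) :=
          hoeffding_pointwise hm01.1 hm01.2 s
      _ = Real.exp (s * vstar + s ^ 2 / 8) := by rw [hm]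
  have hch := measure_le_le_exp_mul_mgf (X := ∑ t, X t) (μ := μ)
    ((k : ℝ) * (vstar - δ)) (show s ≤ 0 by rw [hs]; linarith) h_int_sum
  have hprod : mgf (∑ t, X t) μ s = ∏ t, mgf (X t) μ s :=
    h_indepX.mgf_sum h_meas Finset.univ
  have hprod_le : mgf (∑ t, X t) μ s ≤ Real.exp ((k:ℝ) * (s * vstar + s ^ 2 / 8)) := by
    rw [hprod]
    calc ∏ t, mgf (X t) μ s ≤ ∏ _t : Fin k, Real.exp (s * vstar + s ^ 2 / 8) :=
          Finset.prod_le_prod (fun t _ => mgf_nonneg) (fun t _ => hmgf_le t)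
      _ = Real.exp ((k:ℝ) * (s * vstar + s ^ 2 / 8)) := by
          rw [Finset.prod_const, ← Real.exp_nat_mul]
          simp
  have hfinal : (μ {ω | (∑ t, X t) ω ≤ (k : ℝ) * (vstar - δ)}).toReal ≤
      Real.exp (-(2 * δ ^ 2 * k)) := by
    calc (μ {ω | (∑ t, X t) ω ≤ (k : ℝ) * (vstar - δ)}).toReal
        ≤ Real.exp (-s * ((k:ℝ) * (vstar - δ))) * mgf (∑ t, X t) μ s := hch
      _ ≤ Real.exp (-s * ((k:ℝ) * (vstar - δ))) * Real.exp ((k:ℝ) * (s * vstar + s ^ 2 / 8)) :=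
          mul_le_mul_of_nonneg_left hprod_le (Real.exp_pos _).le
      _ = Real.exp (-(2 * δ ^ 2 * k)) := by
          rw [← Real.exp_add]
          congr 1
          rw [hs]
          ring
  have hset : {ω | ∑ t, R i (J t ω) ≤ (k : ℝ) * (vstar - δ)} =
      {ω | (∑ t, X t) ω ≤ (k : ℝ) * (vstar - δ)} := by
    ext ω; simp [hX]
  rw [hset]
  rw [← ENNReal.ofReal_toReal (measure_ne_top μ _)]
  exact ENNReal.ofReal_le_ofReal hfinal

/-- union bound over a subset I of supp(x*) of size at most k: the
probability that some i ∈ I has R_{i•}Y < v* − δ is at most k·e^{−2δ²k}, which is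
less than 1/2 when k ≥ 2 ln(1/δ)/δ². -/
theorem union_bound_sampled_payoffs {n k : ℕ} (hn : 0 < n) (hk : 0 < k)
    {Ω : Type*} [MeasurableSpace Ω] (μ : Measure Ω) [IsProbabilityMeasure μ]
    (R C : Matrix (Fin n) (Fin n) ℝ)
    (hR : ∀ i j, R i j ∈ Set.Icc (0:ℝ) 1) (hC : ∀ i j, C i j ∈ Set.Icc (0:ℝ) 1)
    (xs ys : Fin n → ℝ)
    (hxs0 : ∀ i, 0 ≤ xs i) (hxs1 : ∑ i, xs i = 1)
    (hys0 : ∀ j, 0 ≤ ys j) (hys1 : ∑ j, ys j = 1)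
    (vstar : ℝ) (hvstar : vstar = ∑ i, ∑ j, xs i * R i j * ys j)
    (hNashR : ∀ i, (∑ j, R i j * ys j) ≤ vstar)
    (hNashC : ∀ j, (∑ i, xs i * C i j) ≤ ∑ i, ∑ j, xs i * C i j * ys j)
    (δ : ℝ) (hδ : 0 < δ) (hkδ : 2 * Real.log (1 / δ) / δ ^ 2 ≤ (k : ℝ))
    (J : Fin k → Ω → Fin n) (hJmeas : ∀ t, Measurable (J t))
    (hindep : iIndepFun J μ)
    (hlaw : ∀ t j, μ {ω | J t ω = j} = ENNReal.ofReal (ys j))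
    (Y : Ω → Fin n → ℝ)
    (hY : ∀ ω j, Y ω j = (1 / k : ℝ) * ∑ t, if J t ω = j then 1 else 0)
    (I : Finset (Fin n)) (hI : ∀ i ∈ I, 0 < xs i) (hIcard : I.card ≤ k) :
    μ {ω | ∃ i ∈ I, ∑ j, R i j * Y ω j < vstar - δ} ≤
      ENNReal.ofReal ((k : ℝ) * Real.exp (-2 * δ ^ 2 * k)) ∧
    (k : ℝ) * Real.exp (-2 * δ ^ 2 * k) < 1 / 2 := by
  classical
  refine ⟨?_, analytic_half_bound hk hδ hkδ⟩
  have hkR : (0 : ℝ) < (k : ℝ) := by exact_mod_cast hk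
  -- support equality
  have hv2 : vstar = ∑ i, xs i * ∑ j, R i j * ys j := by
    rw [hvstar]
    refine Finset.sum_congr rfl fun i _ => ?_
    rw [Finset.mul_sum]
    exact Finset.sum_congr rfl fun j _ => by ring
  have hsupp : ∀ i ∈ I, ∑ j, R i j * ys j = vstar := by
    intro i hi
    refine le_antisymm (hNashR i) ?_
    by_contra hcon
    push_neg at hcon
    have hlt : ∑ i', xs i' * ∑ j, R i' j * ys j < ∑ i', xs i' * vstar :=
      Finset.sum_lt_sum
        (fun i' _ => mul_le_mul_of_nonneg_left (hNashR i') (hxs0 i'))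
        ⟨i, Finset.mem_univ i, mul_lt_mul_of_pos_left hcon (hI i hi)⟩
    rw [← Finset.sum_mul, hxs1, one_mul, ← hv2] at hlt
    exact lt_irrefl _ hlt
  -- rewrite the payoff sum
  have key : ∀ (i : Fin n) (ω : Ω),
      ∑ j, R i j * Y ω j = (1 / k : ℝ) * ∑ t, R i (J t ω) := by
    intro i ω
    have hfold : ∀ t, ∑ j, (if J t ω = j then R i j else 0) = R i (J t ω) := fun t => by simp
    calc ∑ j, R i j * Y ω j
        = ∑ j, ∑ t, (1 / k : ℝ) * (if J t ω = j then R i j else 0) := by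
          refine Finset.sum_congr rfl fun j _ => ?_
          rw [hY ω j]
          simp only [Finset.mul_sum]
          refine Finset.sum_congr rfl fun t _ => ?_
          split <;> ring
      _ = ∑ t, ∑ j, (1 / k : ℝ) * (if J t ω = j then R i j else 0) := Finset.sum_comm
      _ = (1 / k : ℝ) * ∑ t, R i (J t ω) := by
          rw [Finset.mul_sum]
          refine Finset.sum_congr rfl fun t _ => ?_
          rw [← Finset.mul_sum, hfold t]
  -- per-i subset and bound
  have hbound : ∀ i ∈ I, μ {ω | ∑ j, R i j * Y ω j < vstar - δ} ≤
      ENNReal.ofReal (Real.exp (-(2 * δ ^ 2 * k))) := by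
    intro i hi
    refine le_trans (measure_mono ?_)
      (chernoff_one_row μ R hR ys hys0 hys1 vstar δ hδ J hJmeas hindep hlaw i (hsupp i hi))
    intro ω hω
    simp only [Set.mem_setOf_eq] at hω ⊢
    rw [key i ω] at hω
    have h2 : (1 / k : ℝ) * ∑ t, R i (J t ω) < vstar - δ := hω
    have h3 := mul_lt_mul_of_pos_left h2 hkR
    rw [← mul_assoc] at h3
    have h4 : (k : ℝ) * (1 / k) = 1 := by field_simp
    rw [h4, one_mul] at h3
    exact h3.le
  -- union bound
  have hset : {ω | ∃ i ∈ I, ∑ j, R i j * Y ω j < vstar - δ} =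
      ⋃ i ∈ I, {ω | ∑ j, R i j * Y ω j < vstar - δ} := by
    ext ω; simp
  rw [hset]
  calc μ (⋃ i ∈ I, {ω | ∑ j, R i j * Y ω j < vstar - δ})
      ≤ ∑ i ∈ I, μ {ω | ∑ j, R i j * Y ω j < vstar - δ} :=
        measure_biUnion_finset_le I _
    _ ≤ ∑ _i ∈ I, ENNReal.ofReal (Real.exp (-(2 * δ ^ 2 * k))) :=
        Finset.sum_le_sum hbound
    _ = (I.card : ENNReal) * ENNReal.ofReal (Real.exp (-(2 * δ ^ 2 * k))) := by
        rw [Finset.sum_const, nsmul_eq_mul]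
    _ ≤ (k : ENNReal) * ENNReal.ofReal (Real.exp (-(2 * δ ^ 2 * k))) := by
        apply mul_le_mul_left
        exact_mod_cast hIcard
    _ = ENNReal.ofReal ((k : ℝ) * Real.exp (-2 * δ ^ 2 * k)) := by
        rw [ENNReal.ofReal_mul (by positivity : (0:ℝ) ≤ (k:ℝ))]
        rw [ENNReal.ofReal_natCast]
        congr 2
        ring
end

section
/- Let X and Y be random mixed strategies (random probability vectors) such that supp(X) ⊆ S and supp(Y) ⊆ T almost surely for finite sets S, T, and suppose that for every subset I ⊆ S, P(R_{i•}Y < v for some i ∈ I | supp(X) = I) < 1/2, and for every subset J ⊆ T, P(XᵀC_{•j} < u for some j ∈ J | supp(Y) = J) < 1/2 (whenever these events have positive probability). Then P(R_{i•}Y ≥ v for all i ∈ supp(X) and XᵀC_{•j} ≥ u for all j ∈ supp(Y)) > 0; in particular there exist realizations (x, y) that well support (v, u). -/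
open MeasureTheory

lemma aux_half_bound {n : ℕ} {Ω : Type*} [MeasurableSpace Ω]
    (μ : Measure Ω) [IsProbabilityMeasure μ]
    (X : Ω → Fin n → ℝ) (hXmeas : Measurable X) (P : Ω → Fin n → ℝ)
    (S : Finset (Fin n))
    (hXS : ∀ᵐ ω ∂μ, {i | 0 < X ω i} ⊆ (S : Set (Fin n))) (v : ℝ)
    (hcond : ∀ I : Finset (Fin n), I ⊆ S →
      μ {ω | {i | 0 < X ω i} = (I : Set (Fin n))} ≠ 0 →
      μ {ω | {i | 0 < X ω i} = (I : Set (Fin n)) ∧ ∃ i ∈ I, P ω i < v} <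
        (1 / 2 : ENNReal) * μ {ω | {i | 0 < X ω i} = (I : Set (Fin n))}) :
    μ {ω | ∃ i, 0 < X ω i ∧ P ω i < v} < 1 / 2 := by
  classical
  set F : Finset (Fin n) → Set Ω :=
    fun I => {ω | {i | 0 < X ω i} = (I : Set (Fin n))} with hF
  set E : Finset (Fin n) → Set Ω :=
    fun I => {ω | {i | 0 < X ω i} = (I : Set (Fin n)) ∧ ∃ i ∈ I, P ω i < v} with hE
  have hFmeas : ∀ I, MeasurableSet (F I) := by
    intro I
    have hiff : F I = ⋂ i, {ω | 0 < X ω i ↔ i ∈ I} := by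
      ext ω
      simp only [hF, Set.mem_setOf_eq, Set.ext_iff, Set.mem_iInter, Finset.coe_mem,
        Finset.mem_coe]
    rw [hiff]
    refine MeasurableSet.iInter fun i => ?_
    have hXi : Measurable fun ω => X ω i := (measurable_pi_apply i).comp hXmeas
    have hms : MeasurableSet {ω | 0 < X ω i} := measurableSet_lt measurable_const hXi
    by_cases h : i ∈ I
    · have he : {ω | 0 < X ω i ↔ i ∈ I} = {ω | 0 < X ω i} := by ext ω; simp [h]
      rw [he]; exact hms
    · have he : {ω | 0 < X ω i ↔ i ∈ I} = {ω | 0 < X ω i}ᶜ := by ext ω; simp [h]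
      rw [he]; exact hms.compl
  -- for a.e. ω, the support is the coe of S.filter (0 < X ω ·)
  have hsupp : ∀ ω, {i | 0 < X ω i} ⊆ (S : Set (Fin n)) →
      {i | 0 < X ω i} = ((S.filter fun i => 0 < X ω i : Finset (Fin n)) : Set (Fin n)) := by
    intro ω h
    ext i
    simp only [Set.mem_setOf_eq, Finset.coe_filter, Set.mem_setOf_eq]
    exact ⟨fun hi => ⟨h hi, hi⟩, fun hi => hi.2⟩
  -- the F I for I ⊆ S cover a.e.
  have hcovnull : μ (⋃ I ∈ S.powerset, F I)ᶜ = 0 := by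
    have : ∀ᵐ ω ∂μ, ω ∈ ⋃ I ∈ S.powerset, F I := by
      filter_upwards [hXS] with ω hω
      have hImem : (S.filter fun i => 0 < X ω i) ∈ S.powerset :=
        Finset.mem_powerset.2 (Finset.filter_subset _ _)
      exact Set.mem_biUnion hImem (hsupp ω hω)
    have h0 : μ {ω | ω ∉ ⋃ I ∈ S.powerset, F I} = 0 := ae_iff.1 this
    exact h0
  have hFdisj : (↑S.powerset : Set (Finset (Fin n))).PairwiseDisjoint F := by
    intro I _ J _ hIJ
    refine Set.disjoint_left.2 fun ω hI hJ => ?_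
    exact hIJ (Finset.coe_injective (hI.symm.trans hJ))
  have hsumF : ∑ I ∈ S.powerset, μ (F I) = μ (⋃ I ∈ S.powerset, F I) :=
    (measure_biUnion_finset hFdisj fun I _ => hFmeas I).symm
  have hsumF_le : ∑ I ∈ S.powerset, μ (F I) ≤ 1 := by
    rw [hsumF]; exact prob_le_one
  have hsumF_ge : (1 : ENNReal) ≤ ∑ I ∈ S.powerset, μ (F I) := by
    rw [hsumF]
    have hmeasU : MeasurableSet (⋃ I ∈ S.powerset, F I) :=
      Finset.measurableSet_biUnion _ fun I _ => hFmeas I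
    have h1 := measure_add_measure_compl (μ := μ) hmeasU
    rw [hcovnull, add_zero] at h1
    rw [measure_univ] at h1
    exact h1.ge
  -- some F I has positive measure
  have hex : ∃ I ∈ S.powerset, μ (F I) ≠ 0 := by
    by_contra h
    push_neg at h
    have : ∑ I ∈ S.powerset, μ (F I) = 0 := Finset.sum_eq_zero fun I hI => h I hI
    rw [this] at hsumF_ge
    exact one_ne_zero (le_antisymm hsumF_ge zero_le) |>.elim
  obtain ⟨I₀, hI₀S, hI₀⟩ := hex
  -- bad set is a.e. covered by the E I
  have hbadnull : μ {ω | ¬ {i | 0 < X ω i} ⊆ (S : Set (Fin n))} = 0 := by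
    simpa [ae_iff] using hXS
  have hbad_le : μ {ω | ∃ i, 0 < X ω i ∧ P ω i < v} ≤ ∑ I ∈ S.powerset, μ (E I) := by
    have hsub : {ω | ∃ i, 0 < X ω i ∧ P ω i < v} ⊆
        (⋃ I ∈ S.powerset, E I) ∪ {ω | ¬ {i | 0 < X ω i} ⊆ (S : Set (Fin n))} := by
      intro ω hω
      by_cases hs : {i | 0 < X ω i} ⊆ (S : Set (Fin n))
      · left
        obtain ⟨i, hi, hvi⟩ := hω
        have hImem : (S.filter fun i => 0 < X ω i) ∈ S.powerset :=
          Finset.mem_powerset.2 (Finset.filter_subset _ _)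
        refine Set.mem_biUnion hImem ⟨hsupp ω hs, i, ?_, hvi⟩
        exact Finset.mem_filter.2 ⟨hs hi, hi⟩
      · right; exact hs
    calc μ {ω | ∃ i, 0 < X ω i ∧ P ω i < v}
        ≤ μ ((⋃ I ∈ S.powerset, E I) ∪ {ω | ¬ {i | 0 < X ω i} ⊆ (S : Set (Fin n))}) :=
          measure_mono hsub
      _ ≤ μ (⋃ I ∈ S.powerset, E I) + μ {ω | ¬ {i | 0 < X ω i} ⊆ (S : Set (Fin n))} :=
          measure_union_le _ _
      _ = μ (⋃ I ∈ S.powerset, E I) := by rw [hbadnull, add_zero]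
      _ ≤ ∑ I ∈ S.powerset, μ (E I) := measure_biUnion_finset_le _ _
  have hle_term : ∀ I ∈ S.powerset, μ (E I) ≤ (1 / 2 : ENNReal) * μ (F I) := by
    intro I hI
    by_cases h : μ (F I) = 0
    · have h0 : μ (E I) = 0 := measure_mono_null (fun ω hω => hω.1) h
      rw [h0, h, mul_zero]
    · exact (hcond I (Finset.mem_powerset.1 hI) h).le
  have hstrict : ∑ I ∈ S.powerset, μ (E I) <
      ∑ I ∈ S.powerset, (1 / 2 : ENNReal) * μ (F I) := by
    rw [← Finset.add_sum_erase _ _ hI₀S, ← Finset.add_sum_erase _ (fun I => (1 / 2 : ENNReal) * μ (F I)) hI₀S]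
    have hfin : ∑ I ∈ S.powerset.erase I₀, μ (E I) ≠ ⊤ :=
      (ENNReal.sum_lt_top.2 fun I _ => measure_lt_top μ _).ne
    refine ENNReal.add_lt_add_of_lt_of_le hfin
      (hcond I₀ (Finset.mem_powerset.1 hI₀S) hI₀) ?_
    exact Finset.sum_le_sum fun I hI => hle_term I (Finset.mem_of_mem_erase hI)
  calc μ {ω | ∃ i, 0 < X ω i ∧ P ω i < v}
      ≤ ∑ I ∈ S.powerset, μ (E I) := hbad_le
    _ < ∑ I ∈ S.powerset, (1 / 2 : ENNReal) * μ (F I) := hstrict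
    _ = (1 / 2 : ENNReal) * ∑ I ∈ S.powerset, μ (F I) := by rw [Finset.mul_sum]
    _ ≤ (1 / 2 : ENNReal) * 1 := mul_le_mul_right hsumF_le _
    _ = 1 / 2 := mul_one _

/-- if for each possible support I of the random strategy X (inside S)
the conditional probability of some i ∈ I having payoff below v is less than 1/2, and
symmetrically for Y, then with positive probability (X, Y) well supports (v, u); in
particular such a realization exists. -/
theorem positive_probability_well_supports {n : ℕ}
    {Ω : Type*} [MeasurableSpace Ω] (μ : Measure Ω) [IsProbabilityMeasure μ]
    (R C : Matrix (Fin n) (Fin n) ℝ)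
    (hR : ∀ i j, R i j ∈ Set.Icc (0:ℝ) 1) (hC : ∀ i j, C i j ∈ Set.Icc (0:ℝ) 1)
    (X Y : Ω → Fin n → ℝ) (hXmeas : Measurable X) (hYmeas : Measurable Y)
    (hXprob : ∀ᵐ ω ∂μ, (∀ i, 0 ≤ X ω i) ∧ ∑ i, X ω i = 1)
    (hYprob : ∀ᵐ ω ∂μ, (∀ j, 0 ≤ Y ω j) ∧ ∑ j, Y ω j = 1)
    (S T : Finset (Fin n))
    (hXS : ∀ᵐ ω ∂μ, {i | 0 < X ω i} ⊆ (S : Set (Fin n)))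
    (hYT : ∀ᵐ ω ∂μ, {j | 0 < Y ω j} ⊆ (T : Set (Fin n)))
    (v u : ℝ)
    (hXcond : ∀ I : Finset (Fin n), I ⊆ S →
      μ {ω | {i | 0 < X ω i} = (I : Set (Fin n))} ≠ 0 →
      μ {ω | {i | 0 < X ω i} = (I : Set (Fin n)) ∧
             ∃ i ∈ I, ∑ j, R i j * Y ω j < v} <
        (1 / 2 : ENNReal) * μ {ω | {i | 0 < X ω i} = (I : Set (Fin n))})
    (hYcond : ∀ J : Finset (Fin n), J ⊆ T →
      μ {ω | {j | 0 < Y ω j} = (J : Set (Fin n))} ≠ 0 →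
      μ {ω | {j | 0 < Y ω j} = (J : Set (Fin n)) ∧
             ∃ j ∈ J, ∑ i, X ω i * C i j < u} <
        (1 / 2 : ENNReal) * μ {ω | {j | 0 < Y ω j} = (J : Set (Fin n))}) :
    0 < μ {ω | (∀ i, 0 < X ω i → v ≤ ∑ j, R i j * Y ω j) ∧
               (∀ j, 0 < Y ω j → u ≤ ∑ i, X ω i * C i j)} ∧
    ∃ x y : Fin n → ℝ, (∃ ω, X ω = x ∧ Y ω = y) ∧
      (∀ i, 0 < x i → v ≤ ∑ j, R i j * y j) ∧
      (∀ j, 0 < y j → u ≤ ∑ i, x i * C i j) := by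
  classical
  have hXbad : μ {ω | ∃ i, 0 < X ω i ∧ (∑ j, R i j * Y ω j) < v} < 1 / 2 :=
    aux_half_bound μ X hXmeas (fun ω i => ∑ j, R i j * Y ω j) S hXS v hXcond
  have hYbad : μ {ω | ∃ j, 0 < Y ω j ∧ (∑ i, X ω i * C i j) < u} < 1 / 2 :=
    aux_half_bound μ Y hYmeas (fun ω j => ∑ i, X ω i * C i j) T hYT u hYcond
  set G : Set Ω := {ω | (∀ i, 0 < X ω i → v ≤ ∑ j, R i j * Y ω j) ∧
               (∀ j, 0 < Y ω j → u ≤ ∑ i, X ω i * C i j)} with hG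
  have hGc : Gᶜ ⊆ {ω | ∃ i, 0 < X ω i ∧ (∑ j, R i j * Y ω j) < v} ∪
      {ω | ∃ j, 0 < Y ω j ∧ (∑ i, X ω i * C i j) < u} := by
    intro ω hω
    simp only [hG, Set.mem_compl_iff, Set.mem_setOf_eq, not_and_or, not_forall] at hω
    rcases hω with h | h
    · left
      obtain ⟨i, hi⟩ := h
      push_neg at hi
      exact ⟨i, hi.1, hi.2⟩
    · right
      obtain ⟨j, hj⟩ := h
      push_neg at hj
      exact ⟨j, hj.1, hj.2⟩
  have hGclt : μ Gᶜ < 1 := by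
    calc μ Gᶜ ≤ μ ({ω | ∃ i, 0 < X ω i ∧ (∑ j, R i j * Y ω j) < v} ∪
        {ω | ∃ j, 0 < Y ω j ∧ (∑ i, X ω i * C i j) < u}) := measure_mono hGc
      _ ≤ _ + _ := measure_union_le _ _
      _ < 1 / 2 + 1 / 2 := ENNReal.add_lt_add hXbad hYbad
      _ = 1 := by rw [ENNReal.add_halves]
  have hGpos : 0 < μ G := by
    by_contra h
    push_neg at h
    have hG0 : μ G = 0 := le_antisymm h zero_le
    have : (1 : ENNReal) ≤ μ Gᶜ := by
      have h1 : (1 : ENNReal) = μ (G ∪ Gᶜ) := by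
        rw [Set.union_compl_self]; exact (measure_univ).symm
      calc (1 : ENNReal) = μ (G ∪ Gᶜ) := h1
        _ ≤ μ G + μ Gᶜ := measure_union_le _ _
        _ = μ Gᶜ := by rw [hG0, zero_add]
    exact absurd (lt_of_le_of_lt this hGclt) (lt_irrefl _)
  refine ⟨hGpos, ?_⟩
  obtain ⟨ω, hω⟩ := nonempty_of_measure_ne_zero hGpos.ne'
  exact ⟨X ω, Y ω, ⟨ω, rfl, rfl⟩, hω.1, hω.2⟩
end
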